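/- arXiv:1602.02882 — 2 statements merged into one kernel-verified Lean document; each statement's English description precedes it below -/
import Mathlib

section
/- Let d ≥ 1, let h : ℝ^d → ℂ satisfy |h(x)| ≤ A/(1 + |x|^{d+τ}) for all x ∈ ℝ^d, with fixed constants A < ∞ and τ > 0, and let (x_i)_{i ∈ ℕ⁺} be points in ℝ^d satisfying |x_i − x_j| ≥ Δ for all i ≠ j, with a fixed Δ > 0. Then for every ε > 0 there exists a fixed δ ∈ (0, ∞) such that sup over all n ∈ ℕ⁺ and all 1 ≤ i ≤ n of the sum over 1 ≤ j ≤ n, j ≠ i, of |h(δ(x_i − x_j))| is at most ε. -/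
open scoped BigOperators Real

lemma aux_pow_sub_pow {a b : ℝ} (n : ℕ) (hb : 0 ≤ b) (hba : b ≤ a) :
    a ^ n - b ^ n ≤ n * a ^ (n - 1) * (a - b) := by
  rw [← geom_sum₂_mul a b n]
  have hsum : (∑ i ∈ Finset.range n, a ^ i * b ^ (n - 1 - i)) ≤ n * a ^ (n - 1) := by
    calc (∑ i ∈ Finset.range n, a ^ i * b ^ (n - 1 - i))
        ≤ ∑ _i ∈ Finset.range n, a ^ (n - 1) := by
          refine Finset.sum_le_sum fun i hi => ?_
          have hin : i + (n - 1 - i) = n - 1 := by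
            have := Finset.mem_range.mp hi; omega
          calc a ^ i * b ^ (n - 1 - i) ≤ a ^ i * a ^ (n - 1 - i) := by
                have ha : 0 ≤ a := hb.trans hba
                gcongr
              _ = a ^ (n - 1) := by rw [← pow_add, hin]
      _ = n * a ^ (n - 1) := by rw [Finset.sum_const, Finset.card_range, nsmul_eq_mul]
  exact mul_le_mul_of_nonneg_right hsum (sub_nonneg.mpr hba)

lemma aux_floor_abs (a b : ℝ) (k : ℤ) (h : k = ⌊a⌋ - ⌊b⌋) : |(k : ℝ)| ≤ |a - b| + 1 := by
  have h1 := Int.floor_le a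
  have h2 := Int.lt_floor_add_one a
  have h3 := Int.floor_le b
  have h4 := Int.lt_floor_add_one b
  have hk : (k : ℝ) = (⌊a⌋ : ℝ) - (⌊b⌋ : ℝ) := by rw [h]; push_cast; ring
  rw [hk, abs_le]
  constructor <;>
  · cases abs_cases (a - b) <;> nlinarith [le_abs_self (a - b), neg_abs_le (a - b)]

/-- If `h : ℝ^d → ℂ` decays like `A / (1 + |x|^{d+τ})` and the points `(x_i)` are pairwise
separated by a minimal distance `Δ > 0`, then for every `ε > 0` there is a scaling `δ > 0`
such that, uniformly in `n` and in `1 ≤ i ≤ n`, the sum over `j ≠ i`, `1 ≤ j ≤ n`, of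
`|h(δ (x_i − x_j))|` is at most `ε`. -/
theorem off_diagonal_sum_le_of_separated
    (d : ℕ) (hd : 1 ≤ d)
    (h : (Fin d → ℝ) → ℂ) (A τ : ℝ) (hτ : 0 < τ)
    (hdecay : ∀ x : Fin d → ℝ, ‖h x‖ ≤ A / (1 + ‖x‖ ^ ((d : ℝ) + τ)))
    (x : ℕ → (Fin d → ℝ)) (Δ : ℝ) (hΔ : 0 < Δ)
    (hsep : ∀ i j : ℕ, i ≠ j → Δ ≤ ‖x i - x j‖) :
    ∀ ε > (0 : ℝ), ∃ δ > (0 : ℝ), ∀ n : ℕ, 1 ≤ n → ∀ i ∈ Finset.range n,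
      ∑ j ∈ (Finset.range n).erase i, ‖h (δ • (x i - x j))‖ ≤ ε := by
  intro ε hε
  set s : ℝ := (d : ℝ) + τ with hs_def
  have hs : 0 < s := by positivity
  have hA : 0 ≤ A := by
    have h0 := hdecay 0
    rw [norm_zero, Real.zero_rpow hs.ne', add_zero, div_one] at h0
    exact (norm_nonneg _).trans h0
  have hsummable : Summable (fun k : ℕ => (k : ℝ) ^ (-(1 + τ))) :=
    Real.summable_nat_rpow.mpr (by linarith)
  set T : ℝ := ∑' k : ℕ, (k : ℝ) ^ (-(1 + τ)) with hT_def
  have hT0 : 0 ≤ T := tsum_nonneg fun k => Real.rpow_nonneg (Nat.cast_nonneg k) _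
  set B : ℝ := A * (2 * d * 3 ^ (d - 1)) * T with hB_def
  have hB0 : 0 ≤ B := by positivity
  set R : ℝ := max 1 (((B + 1) / ε) ^ (1 / s)) with hR_def
  have hR1 : (1 : ℝ) ≤ R := le_max_left _ _
  have hR0 : 0 < R := zero_lt_one.trans_le hR1
  refine ⟨2 * R / Δ, by positivity, ?_⟩
  intro n hn i hi
  set δ : ℝ := 2 * R / Δ with hδ_def
  have hδ0 : 0 < δ := by positivity
  have hδΔ : δ * (Δ / 2) = R := by rw [hδ_def]; field_simp
  set m : ℕ → (Fin d → ℤ) := fun j c => ⌊x j c / Δ⌋ with hm_def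
  -- injectivity of the lattice map
  have hminj : ∀ j j' : ℕ, j ≠ j' → m j ≠ m j' := by
    intro j j' hjj' hEq
    have hlt : ‖x j - x j'‖ < Δ := by
      rw [pi_norm_lt_iff hΔ]
      intro c
      have hc : ⌊x j c / Δ⌋ = ⌊x j' c / Δ⌋ := congrFun hEq c
      have h1 := Int.floor_le (x j c / Δ)
      have h2 := Int.lt_floor_add_one (x j c / Δ)
      have h3 := Int.floor_le (x j' c / Δ)
      have h4 := Int.lt_floor_add_one (x j' c / Δ)
      rw [hc] at h1 h2
      have hq : |x j c / Δ - x j' c / Δ| < 1 := by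
        rw [abs_lt]; constructor <;> linarith
      have habs : |x j c - x j' c| < Δ := by
        rw [← sub_div, abs_div, abs_of_pos hΔ, div_lt_one hΔ] at hq
        exact hq
      simpa [Real.norm_eq_abs] using habs
    exact absurd (hsep j j' hjj') (not_le.mpr hlt)
  set K : ℕ → ℕ := fun j => Finset.univ.sup (fun c => (m j c - m i c).natAbs) with hK_def
  have huniv_ne : (Finset.univ : Finset (Fin d)).Nonempty := ⟨⟨0, hd⟩, Finset.mem_univ _⟩
  -- `K j ≥ 1` for `j ≠ i`
  have hK1 : ∀ j : ℕ, j ≠ i → 1 ≤ K j := by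
    intro j hji
    obtain ⟨c, hc⟩ := Function.ne_iff.mp (hminj j i hji)
    have h1 : 1 ≤ (m j c - m i c).natAbs := Int.natAbs_pos.mpr (sub_ne_zero.mpr hc)
    exact h1.trans (Finset.le_sup (f := fun c => (m j c - m i c).natAbs) (Finset.mem_univ c))
  -- distance lower bound in terms of `K`
  have hKdist : ∀ j : ℕ, j ≠ i → (K j : ℝ) * (Δ / 2) ≤ ‖x i - x j‖ := by
    intro j hji
    obtain ⟨c, -, hc⟩ := Finset.exists_mem_eq_sup Finset.univ huniv_ne
      (fun c => (m j c - m i c).natAbs)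
    have hcastK : (K j : ℝ) = |((m j c - m i c : ℤ) : ℝ)| := by
      rw [hK_def]
      simp only [hc, Nat.cast_natAbs]
      push_cast
      rfl
    have hfl : |((m j c - m i c : ℤ) : ℝ)| ≤ |x j c / Δ - x i c / Δ| + 1 :=
      aux_floor_abs (x j c / Δ) (x i c / Δ) _ rfl
    have hcoord : |x j c - x i c| ≤ ‖x i - x j‖ := by
      have h1 := norm_le_pi_norm (x i - x j) c
      rw [Pi.sub_apply, Real.norm_eq_abs] at h1
      rw [abs_sub_comm]
      exact h1
    have hsepij : Δ ≤ ‖x i - x j‖ := hsep i j (fun hh => hji hh.symm)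
    set D := ‖x i - x j‖ with hD_def
    have hKle : (K j : ℝ) ≤ D / Δ + 1 := by
      rw [hcastK]
      refine hfl.trans ?_
      have hdivd : |x j c / Δ - x i c / Δ| = |x j c - x i c| / Δ := by
        rw [← sub_div, abs_div, abs_of_pos hΔ]
      rw [hdivd]
      gcongr
    have hone : (1 : ℝ) ≤ D / Δ := (one_le_div hΔ).mpr hsepij
    have h2D : (K j : ℝ) ≤ 2 * D / Δ := by
      refine hKle.trans ?_
      calc D / Δ + 1 ≤ D / Δ + D / Δ := by linarith
        _ = 2 * D / Δ := by ring
    calc (K j : ℝ) * (Δ / 2) ≤ (2 * D / Δ) * (Δ / 2) :=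
          mul_le_mul_of_nonneg_right h2D (by positivity)
      _ = D := by field_simp
  -- shell counting
  have hcount : ∀ k : ℕ, 1 ≤ k →
      ((((Finset.range n).erase i).filter (fun j => K j = k)).card : ℕ)
        ≤ (2 * k + 1) ^ d - (2 * k - 1) ^ d := by
    intro k hk
    set a : Fin d → ℤ := m i with ha_def
    set Outer : Finset (Fin d → ℤ) :=
      Finset.Icc (fun c => a c - k) (fun c => a c + k) with hOuter_def
    set Inner : Finset (Fin d → ℤ) :=
      Finset.Icc (fun c => a c - ((k : ℤ) - 1)) (fun c => a c + ((k : ℤ) - 1)) with hInner_def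
    have hsub : Inner ⊆ Outer := by
      refine Finset.Icc_subset_Icc ?_ ?_ <;> intro c <;> simp <;> omega
    have hmaps : ∀ j ∈ ((Finset.range n).erase i).filter (fun j => K j = k),
        m j ∈ Outer \ Inner := by
      intro j hj
      obtain ⟨hje, hjk⟩ := Finset.mem_filter.mp hj
      have hji : j ≠ i := Finset.ne_of_mem_erase hje
      have hall : ∀ c, (m j c - a c).natAbs ≤ k := by
        intro c
        have h1 : (m j c - m i c).natAbs ≤ K j :=
          Finset.le_sup (f := fun c => (m j c - m i c).natAbs) (Finset.mem_univ c)
        exact h1.trans (le_of_eq hjk)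
      have hex : ∃ c, (m j c - a c).natAbs = k := by
        obtain ⟨c, -, hc⟩ := Finset.exists_mem_eq_sup Finset.univ huniv_ne
          (fun c => (m j c - m i c).natAbs)
        exact ⟨c, by rw [← hc]; exact hjk.symm ▸ rfl⟩
      rw [Finset.mem_sdiff]
      constructor
      · rw [hOuter_def, Finset.mem_Icc]
        constructor <;> intro c <;>
        · have hc := hall c
          beta_reduce
          omega
      · intro hmem
        rw [hInner_def, Finset.mem_Icc] at hmem
        obtain ⟨c, hc⟩ := hex
        have h1 := hmem.1 c
        have h2 := hmem.2 c
        beta_reduce at h1 h2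
        omega
    have hinj : Set.InjOn m ↑(((Finset.range n).erase i).filter (fun j => K j = k)) := by
      intro j1 _ j2 _ hEq
      by_contra hne
      exact hminj j1 j2 hne hEq
    have hcard := Finset.card_le_card_of_injOn m hmaps hinj
    have hOcard : Outer.card = (2 * k + 1) ^ d := by
      rw [hOuter_def, Pi.card_Icc]
      have : ∀ c : Fin d, (Finset.Icc (a c - (k : ℤ)) (a c + k)).card = 2 * k + 1 := by
        intro c
        rw [Int.card_Icc]
        omega
      simp only [this, Finset.prod_const, Finset.card_univ, Fintype.card_fin]
    have hIcard : Inner.card = (2 * k - 1) ^ d := by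
      rw [hInner_def, Pi.card_Icc]
      have : ∀ c : Fin d, (Finset.Icc (a c - ((k : ℤ) - 1)) (a c + ((k : ℤ) - 1))).card
          = 2 * k - 1 := by
        intro c
        rw [Int.card_Icc]
        omega
      simp only [this, Finset.prod_const, Finset.card_univ, Fintype.card_fin]
    calc (((Finset.range n).erase i).filter (fun j => K j = k)).card
        ≤ (Outer \ Inner).card := hcard
      _ = Outer.card - Inner.card := Finset.card_sdiff_of_subset hsub
      _ = (2 * k + 1) ^ d - (2 * k - 1) ^ d := by rw [hOcard, hIcard]
  -- real version of the shell count
  have hcountR : ∀ k : ℕ, 1 ≤ k →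
      ((((Finset.range n).erase i).filter (fun j => K j = k)).card : ℝ)
        ≤ 2 * d * 3 ^ (d - 1) * (k : ℝ) ^ (d - 1) := by
    intro k hk
    have h1 := hcount k hk
    have hle : (2 * k - 1) ^ d ≤ (2 * k + 1) ^ d := Nat.pow_le_pow_left (by omega) d
    have hcast1 : ((2 * k - 1 : ℕ) : ℝ) = 2 * (k : ℝ) - 1 := by
      push_cast [Nat.cast_sub (by omega : 1 ≤ 2 * k)]
      ring
    have hk1R : (1 : ℝ) ≤ (k : ℝ) := by exact_mod_cast hk
    calc ((((Finset.range n).erase i).filter (fun j => K j = k)).card : ℝ)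
        ≤ (((2 * k + 1) ^ d - (2 * k - 1) ^ d : ℕ) : ℝ) := by exact_mod_cast h1
      _ = ((2 * k + 1 : ℕ) : ℝ) ^ d - ((2 * k - 1 : ℕ) : ℝ) ^ d := by
          rw [Nat.cast_sub hle]; push_cast; ring
      _ ≤ d * ((2 * k + 1 : ℕ) : ℝ) ^ (d - 1)
            * (((2 * k + 1 : ℕ) : ℝ) - ((2 * k - 1 : ℕ) : ℝ)) := by
          refine aux_pow_sub_pow d (by positivity) ?_
          rw [hcast1]; push_cast; linarith
      _ = 2 * d * ((2 * (k : ℝ) + 1)) ^ (d - 1) := by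
          rw [hcast1]; push_cast; ring
      _ ≤ 2 * d * ((3 * (k : ℝ))) ^ (d - 1) := by
          gcongr
          linarith
      _ = 2 * d * 3 ^ (d - 1) * (k : ℝ) ^ (d - 1) := by
          rw [mul_pow]; ring
  -- pointwise bound on each summand
  have hterm : ∀ j ∈ (Finset.range n).erase i,
      ‖h (δ • (x i - x j))‖ ≤ (A / R ^ s) * ((K j : ℝ)) ^ (-s) := by
    intro j hj
    have hji : j ≠ i := Finset.ne_of_mem_erase hj
    have hKj1 : (1 : ℝ) ≤ (K j : ℝ) := by exact_mod_cast hK1 j hji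
    have hKj0 : (0 : ℝ) < (K j : ℝ) := zero_lt_one.trans_le hKj1
    have hnorm : R * (K j : ℝ) ≤ ‖δ • (x i - x j)‖ := by
      rw [norm_smul, Real.norm_eq_abs, abs_of_pos hδ0]
      calc R * (K j : ℝ) = δ * ((K j : ℝ) * (Δ / 2)) := by rw [← hδΔ]; ring
        _ ≤ δ * ‖x i - x j‖ := by
            have := hKdist j hji
            gcongr
    have hRK0 : (0 : ℝ) < R * (K j : ℝ) := mul_pos hR0 hKj0
    refine (hdecay _).trans ?_
    have hpow : (R * (K j : ℝ)) ^ s ≤ ‖δ • (x i - x j)‖ ^ s :=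
      Real.rpow_le_rpow hRK0.le hnorm hs.le
    have hb0 : (0 : ℝ) < (R * (K j : ℝ)) ^ s := Real.rpow_pos_of_pos hRK0 s
    calc A / (1 + ‖δ • (x i - x j)‖ ^ s) ≤ A / ((R * (K j : ℝ)) ^ s) := by
          refine div_le_div_of_nonneg_left hA hb0 ?_
          have h2 : (0 : ℝ) ≤ ‖δ • (x i - x j)‖ ^ s := Real.rpow_nonneg (norm_nonneg _) s
          linarith
      _ = (A / R ^ s) * ((K j : ℝ)) ^ (-s) := by
          rw [Real.mul_rpow hR0.le hKj0.le, Real.rpow_neg hKj0.le]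
          ring
  -- sum the fiberwise bounds
  have hsumK : ∑ j ∈ (Finset.range n).erase i, ((K j : ℝ)) ^ (-s)
      ≤ 2 * d * 3 ^ (d - 1) * T := by
    set F := (Finset.range n).erase i with hF_def
    have hmapsto : ∀ j ∈ F, K j ∈ F.image K := fun j hj => Finset.mem_image_of_mem K hj
    rw [← Finset.sum_fiberwise_of_maps_to hmapsto (fun j => ((K j : ℝ)) ^ (-s))]
    calc ∑ k ∈ F.image K, ∑ j ∈ F.filter (fun j => K j = k), ((K j : ℝ)) ^ (-s)
        = ∑ k ∈ F.image K, ((F.filter (fun j => K j = k)).card : ℝ) * ((k : ℝ)) ^ (-s) := by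
          refine Finset.sum_congr rfl fun k hk => ?_
          rw [Finset.sum_congr rfl (fun j hj => by rw [(Finset.mem_filter.mp hj).2]),
            Finset.sum_const, nsmul_eq_mul]
      _ ≤ ∑ k ∈ F.image K, (2 * d * 3 ^ (d - 1)) * ((k : ℝ)) ^ (-(1 + τ)) := by
          refine Finset.sum_le_sum fun k hk => ?_
          obtain ⟨j, hj, hjk⟩ := Finset.mem_image.mp hk
          have hk1 : 1 ≤ k := hjk ▸ hK1 j (Finset.ne_of_mem_erase hj)
          have hk0 : (0 : ℝ) < (k : ℝ) := by exact_mod_cast hk1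
          calc ((F.filter (fun j => K j = k)).card : ℝ) * ((k : ℝ)) ^ (-s)
              ≤ (2 * d * 3 ^ (d - 1) * (k : ℝ) ^ (d - 1)) * ((k : ℝ)) ^ (-s) := by
                have := hcountR k hk1
                have hkneg : (0 : ℝ) ≤ ((k : ℝ)) ^ (-s) := Real.rpow_nonneg hk0.le _
                exact mul_le_mul_of_nonneg_right this hkneg
            _ = (2 * d * 3 ^ (d - 1)) * ((k : ℝ)) ^ (-(1 + τ)) := by
                rw [mul_assoc, ← Real.rpow_natCast (k : ℝ) (d - 1), ← Real.rpow_add hk0]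
                congr 2
                rw [hs_def]
                push_cast [Nat.cast_sub hd]
                ring
      _ = (2 * d * 3 ^ (d - 1)) * ∑ k ∈ F.image K, ((k : ℝ)) ^ (-(1 + τ)) := by
          rw [Finset.mul_sum]
      _ ≤ 2 * d * 3 ^ (d - 1) * T := by
          have hb : ∑ k ∈ F.image K, ((k : ℝ)) ^ (-(1 + τ)) ≤ T :=
            Summable.sum_le_tsum (F.image K)
              (fun k _ => Real.rpow_nonneg (Nat.cast_nonneg k) _) hsummable
          have hpos : (0 : ℝ) ≤ 2 * d * 3 ^ (d - 1) := by positivity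
          exact mul_le_mul_of_nonneg_left hb hpos
  -- final computation
  have hRspos : (0 : ℝ) < R ^ s := Real.rpow_pos_of_pos hR0 s
  have hRs : (B + 1) / ε ≤ R ^ s := by
    have hx0 : (0 : ℝ) ≤ (B + 1) / ε := by positivity
    have h1 : (((B + 1) / ε) ^ (1 / s)) ^ s ≤ R ^ s :=
      Real.rpow_le_rpow (Real.rpow_nonneg hx0 _) (le_max_right _ _) hs.le
    rwa [← Real.rpow_mul hx0, one_div_mul_cancel hs.ne', Real.rpow_one] at h1
  calc ∑ j ∈ (Finset.range n).erase i, ‖h (δ • (x i - x j))‖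
      ≤ ∑ j ∈ (Finset.range n).erase i, (A / R ^ s) * ((K j : ℝ)) ^ (-s) :=
        Finset.sum_le_sum hterm
    _ = (A / R ^ s) * ∑ j ∈ (Finset.range n).erase i, ((K j : ℝ)) ^ (-s) := by
        rw [Finset.mul_sum]
    _ ≤ (A / R ^ s) * (2 * d * 3 ^ (d - 1) * T) := by
        have : (0 : ℝ) ≤ A / R ^ s := by positivity
        exact mul_le_mul_of_nonneg_left hsumK this
    _ = B / R ^ s := by rw [hB_def]; ring
    _ ≤ ε := by
        rw [div_le_iff₀ hRspos]
        have h1 : B + 1 ≤ R ^ s * ε := (div_le_iff₀ hε).mp hRs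
        nlinarith
end

section
/- Let c : ℝ → ℝ be the triangular covariance function c(h) = (1 − |h|) for |h| ≤ 1 and c(h) = 0 for |h| > 1, and let x_i = i/2 for i ∈ ℕ⁺. For each n ≥ 1 let Σ_n be the n×n matrix with entries (Σ_n)_{ij} = c(x_i − x_j). Then Σ_n is the tridiagonal Toeplitz matrix with diagonal entries 1 and off-diagonal entries 1/2 (all other entries 0), its smallest eigenvalue equals 1 + cos(nπ/(n+1)), which is strictly positive for every n, and this smallest eigenvalue tends to 0 as n → ∞; hence inf over n ∈ ℕ⁺ of λ₁(Σ_n) = 0. -/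
open Matrix Filter
open scoped BigOperators Real Topology



lemma tri_sin_rec' (θ a : ℝ) :
    Real.sin (a * θ) + Real.sin ((a + 2) * θ) = 2 * Real.cos θ * Real.sin ((a + 1) * θ) := by
  have h1 : (a + 2) * θ = (a + 1) * θ + θ := by ring
  have h2 : a * θ = (a + 1) * θ - θ := by ring
  rw [h1, h2, Real.sin_add, Real.sin_sub]
  ring

/-- Trig recurrence for `s k = sin (k θ)`. -/
lemma tri_sin_rec (θ : ℝ) (k : ℕ) :
    Real.sin (k * θ) + Real.sin ((k + 2) * θ) = 2 * Real.cos θ * Real.sin ((k + 1) * θ) := by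
  have h1 : ((k : ℝ) + 2) * θ = ((k : ℝ) + 1) * θ + θ := by ring
  have h2 : (k : ℝ) * θ = ((k : ℝ) + 1) * θ - θ := by ring
  rw [h1, h2, Real.sin_add, Real.sin_sub]
  ring

/-- The key sum-of-squares inequality for the tridiagonal quadratic form. -/
lemma tri_key_ineq (m : ℕ) (X : ℕ → ℝ) :
    0 ≤ Real.cos (π / (m + 2)) * ∑ i ∈ Finset.range (m + 1), X i ^ 2
        + ∑ i ∈ Finset.range m, X i * X (i + 1) := by
  set θ : ℝ := π / (m + 2) with hθ
  have hm2 : (0 : ℝ) < (m : ℝ) + 2 := by positivity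
  have hθpos : 0 < θ := by positivity
  have hspos : ∀ k : ℕ, 1 ≤ k → k ≤ m + 1 → 0 < Real.sin (k * θ) := by
    intro k hk1 hk2
    apply Real.sin_pos_of_pos_of_lt_pi
    · have : (1 : ℝ) ≤ (k : ℝ) := by exact_mod_cast hk1
      nlinarith
    · have hk : (k : ℝ) ≤ (m : ℝ) + 1 := by exact_mod_cast hk2
      have : (k : ℝ) * θ < ((m : ℝ) + 2) * θ := by nlinarith
      calc (k : ℝ) * θ < ((m : ℝ) + 2) * θ := this
        _ = π := by rw [hθ]; field_simp
  have hsn : Real.sin (((m : ℝ) + 2) * θ) = 0 := by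
    have : ((m : ℝ) + 2) * θ = π := by rw [hθ]; field_simp
    rw [this, Real.sin_pi]
  have hcos : ∀ i : ℕ, i ≤ m →
      Real.cos θ = (Real.sin (i * θ) + Real.sin ((i + 2) * θ)) / (2 * Real.sin ((i + 1) * θ)) := by
    intro i hi
    have hpos := hspos (i + 1) (by omega) (by omega)
    push_cast at hpos
    rw [tri_sin_rec]
    field_simp
  have step1 : Real.cos θ * ∑ i ∈ Finset.range (m + 1), X i ^ 2
      = ∑ i ∈ Finset.range (m + 1),
          Real.sin (i * θ) / (2 * Real.sin ((i + 1) * θ)) * X i ^ 2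
        + ∑ i ∈ Finset.range (m + 1),
          Real.sin ((i + 2) * θ) / (2 * Real.sin ((i + 1) * θ)) * X i ^ 2 := by
    rw [Finset.mul_sum, ← Finset.sum_add_distrib]
    apply Finset.sum_congr rfl
    intro i hi
    rw [hcos i (by simpa using Nat.lt_succ_iff.mp (Finset.mem_range.mp hi))]
    ring
  have e1 : ∑ i ∈ Finset.range (m + 1),
      Real.sin (i * θ) / (2 * Real.sin ((i + 1) * θ)) * X i ^ 2
      = ∑ i ∈ Finset.range m,
      Real.sin ((i + 1) * θ) / (2 * Real.sin ((i + 2) * θ)) * X (i + 1) ^ 2 := by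
    rw [Finset.sum_range_succ']
    push_cast
    simp only [Real.sin_zero, Nat.cast_zero, zero_mul, zero_div, zero_mul, add_zero]
    apply Finset.sum_congr rfl
    intro x hx
    norm_num [show ((x:ℝ) + 1 + 1) = (x:ℝ) + 2 by ring]
  have e2 : ∑ i ∈ Finset.range (m + 1),
      Real.sin ((i + 2) * θ) / (2 * Real.sin ((i + 1) * θ)) * X i ^ 2
      = ∑ i ∈ Finset.range m,
      Real.sin ((i + 2) * θ) / (2 * Real.sin ((i + 1) * θ)) * X i ^ 2 := by
    rw [Finset.sum_range_succ, hsn]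
    simp
  rw [step1, e1, e2, ← Finset.sum_add_distrib, ← Finset.sum_add_distrib]
  apply Finset.sum_nonneg
  intro i hi
  have hi' := Finset.mem_range.mp hi
  have ha := hspos (i + 1) (by omega) (by omega)
  have hb := hspos (i + 2) (by omega) (by omega)
  push_cast at ha hb
  have key : Real.sin ((i + 1) * θ) / (2 * Real.sin ((i + 2) * θ)) * X (i + 1) ^ 2
      + Real.sin ((i + 2) * θ) / (2 * Real.sin ((i + 1) * θ)) * X i ^ 2 + X i * X (i + 1)
      = (Real.sin ((i + 1) * θ) * X (i + 1) + Real.sin ((i + 2) * θ) * X i) ^ 2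
        / (2 * Real.sin ((i + 1) * θ) * Real.sin ((i + 2) * θ)) := by
    generalize Real.sin ((i + 1) * θ) = a at ha ⊢
    generalize Real.sin ((i + 2) * θ) = b at hb ⊢
    field_simp
    ring
  rw [key]
  positivity

lemma tri_mulVec (N : ℕ) (A : Matrix (Fin N) (Fin N) ℝ)
    (hA : ∀ i j : Fin N, A i j =
      if (i : ℕ) = (j : ℕ) then 1
      else if (i : ℕ) + 1 = (j : ℕ) ∨ (j : ℕ) + 1 = (i : ℕ) then 1 / 2 else 0)
    (x : Fin N → ℝ) (X : ℕ → ℝ)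
    (hX : ∀ k : ℕ, X k = if h : k < N then x ⟨k, h⟩ else 0) (i : Fin N) :
    (A *ᵥ x) i = X i + X ((i : ℕ) + 1) / 2
      + (if (i : ℕ) = 0 then 0 else X ((i : ℕ) - 1) / 2) := by
  have hx : ∀ j : Fin N, x j = X (j : ℕ) := by
    intro j; rw [hX]; simp [j.isLt]
  have expand : ∀ j : Fin N, A i j * x j =
      (if (j : ℕ) = (i : ℕ) then X (j : ℕ) else 0)
      + (if (j : ℕ) = (i : ℕ) + 1 then X (j : ℕ) / 2 else 0)
      + (if (j : ℕ) + 1 = (i : ℕ) then X (j : ℕ) / 2 else 0) := by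
    intro j
    rw [hA, hx]
    split_ifs <;> first | ring1 | (exfalso; omega)
  have hsum : (A *ᵥ x) i = ∑ j : Fin N, A i j * x j := rfl
  rw [hsum]
  simp only [expand]
  rw [Finset.sum_add_distrib, Finset.sum_add_distrib]
  have s1 : (∑ j : Fin N, if (j : ℕ) = (i : ℕ) then X (j : ℕ) else 0) = X (i : ℕ) := by
    rw [Fin.sum_univ_eq_sum_range (fun k => if k = (i : ℕ) then X k else 0) N]
    rw [Finset.sum_ite_eq' (Finset.range N) (i : ℕ) X]
    simp [i.isLt]
  have s2 : (∑ j : Fin N, if (j : ℕ) = (i : ℕ) + 1 then X (j : ℕ) / 2 else 0)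
      = X ((i : ℕ) + 1) / 2 := by
    rw [Fin.sum_univ_eq_sum_range (fun k => if k = (i : ℕ) + 1 then X k / 2 else 0) N]
    rw [Finset.sum_ite_eq' (Finset.range N) ((i : ℕ) + 1) (fun k => X k / 2)]
    by_cases h : (i : ℕ) + 1 < N
    · simp [h]
    · simp only [Finset.mem_range, h, if_false]
      rw [hX]
      simp [h]
  have s3 : (∑ j : Fin N, if (j : ℕ) + 1 = (i : ℕ) then X (j : ℕ) / 2 else 0)
      = if (i : ℕ) = 0 then 0 else X ((i : ℕ) - 1) / 2 := by
    rw [Fin.sum_univ_eq_sum_range (fun k => if k + 1 = (i : ℕ) then X k / 2 else 0) N]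
    by_cases h0 : (i : ℕ) = 0
    · rw [if_pos h0]
      apply Finset.sum_eq_zero
      intro k _
      rw [if_neg (by omega)]
    · rw [if_neg h0]
      have : ∀ k ∈ Finset.range N, (if k + 1 = (i : ℕ) then X k / 2 else 0)
          = (if k = (i : ℕ) - 1 then X k / 2 else 0) := by
        intro k _
        split_ifs <;> first | rfl | omega
      rw [Finset.sum_congr rfl this,
        Finset.sum_ite_eq' (Finset.range N) ((i : ℕ) - 1) (fun k => X k / 2)]
      have : (i : ℕ) - 1 ∈ Finset.range N := Finset.mem_range.mpr (by omega)
      simp [this]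
  rw [s1, s2, s3]

lemma herm_spectrum_range {N : ℕ} {A : Matrix (Fin N) (Fin N) ℝ} (hA : A.IsHermitian) :
    spectrum ℝ A = Set.range hA.eigenvalues := by
  conv_lhs => rw [hA.spectral_theorem]
  rw [Unitary.conjStarAlgAut_apply, Unitary.spectrum_star_right_conjugate]
  have h : (RCLike.ofReal ∘ hA.eigenvalues : Fin N → ℝ) = hA.eigenvalues := rfl
  rw [h, spectrum_diagonal]

lemma herm_eig_mem {N : ℕ} {A : Matrix (Fin N) (Fin N) ℝ} (hA : A.IsHermitian)
    {v : Fin N → ℝ} (hv : v ≠ 0) {μ : ℝ} (hmul : A *ᵥ v = μ • v) :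
    ∃ i, hA.eigenvalues i = μ := by
  have hdet : (μ • (1 : Matrix (Fin N) (Fin N) ℝ) - A).det = 0 := by
    rw [← Matrix.exists_mulVec_eq_zero_iff]
    exact ⟨v, hv, by
      rw [Matrix.sub_mulVec, Matrix.smul_mulVec, Matrix.one_mulVec, hmul, sub_self]⟩
  have hspec : μ ∈ spectrum ℝ A := by
    rw [spectrum.mem_iff]
    intro h
    rw [Matrix.isUnit_iff_isUnit_det] at h
    rw [Algebra.algebraMap_eq_smul_one, hdet] at h
    exact not_isUnit_zero h
  rw [herm_spectrum_range hA] at hspec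
  exact hspec


/-- Counterexample with the triangular covariance function `c(h) = (1 − |h|)·1_{|h| ≤ 1}`
and observation points `x_i = i/2`: the covariance matrix `Σ_n = {c(x_i − x_j)}` is the
tridiagonal Toeplitz matrix with unit diagonal and off-diagonal entries `1/2`, its smallest
eigenvalue equals `1 + cos(nπ/(n+1))`, which is strictly positive for every `n` but tends
to `0` as `n → ∞`; hence the infimum over `n` of the smallest eigenvalues is `0`. -/
theorem triangular_covariance_smallest_eigenvalue_tends_to_zero
    (c : ℝ → ℝ) (hc : ∀ h : ℝ, c h = if |h| ≤ 1 then 1 - |h| else 0)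
    (S : (n : ℕ) → Matrix (Fin n) (Fin n) ℝ)
    (hS : ∀ (n : ℕ) (i j : Fin n),
      S n i j = c (((i : ℕ) + 1 : ℝ) / 2 - ((j : ℕ) + 1 : ℝ) / 2)) :
    (∀ (n : ℕ) (i j : Fin n), S n i j =
      if (i : ℕ) = (j : ℕ) then 1
      else if (i : ℕ) + 1 = (j : ℕ) ∨ (j : ℕ) + 1 = (i : ℕ) then 1 / 2
      else 0) ∧
    (∀ n : ℕ, 1 ≤ n → ∀ hH : (S n).IsHermitian,
      (⨅ i, hH.eigenvalues i) = 1 + Real.cos (n * π / (n + 1)) ∧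
      0 < ⨅ i, hH.eigenvalues i) ∧
    Tendsto (fun n : ℕ => 1 + Real.cos (n * π / (n + 1))) atTop (𝓝 0) ∧
    sInf {x : ℝ | ∃ n : ℕ, 1 ≤ n ∧ ∃ hH : (S n).IsHermitian,
      x = ⨅ i, hH.eigenvalues i} = 0 := by
  -- Part 1 : the entries
  have hE : ∀ (n : ℕ) (i j : Fin n), S n i j =
      if (i : ℕ) = (j : ℕ) then 1
      else if (i : ℕ) + 1 = (j : ℕ) ∨ (j : ℕ) + 1 = (i : ℕ) then 1 / 2
      else 0 := by
    intro n i j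
    rw [hS n i j, hc]
    have key : (((i : ℕ) : ℝ) + 1) / 2 - (((j : ℕ) : ℝ) + 1) / 2
        = (((i : ℕ) : ℝ) - ((j : ℕ) : ℝ)) / 2 := by ring
    rw [key]
    by_cases h1 : (i : ℕ) = (j : ℕ)
    · rw [if_pos h1, h1]
      norm_num
    · rw [if_neg h1]
      by_cases h2 : (i : ℕ) + 1 = (j : ℕ)
      · have hb : ((j : ℕ) : ℝ) = ((i : ℕ) : ℝ) + 1 := by exact_mod_cast h2.symm
        rw [if_pos (Or.inl h2),
          show (((i : ℕ) : ℝ) - ((j : ℕ) : ℝ)) / 2 = -(1 / 2) by rw [hb]; ring]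
        rw [abs_neg, abs_of_nonneg (by norm_num : (0:ℝ) ≤ 1/2)]
        norm_num
      · by_cases h3 : (j : ℕ) + 1 = (i : ℕ)
        · have ha : ((i : ℕ) : ℝ) = ((j : ℕ) : ℝ) + 1 := by exact_mod_cast h3.symm
          rw [if_pos (Or.inr h3),
            show (((i : ℕ) : ℝ) - ((j : ℕ) : ℝ)) / 2 = 1 / 2 by rw [ha]; ring]
          rw [abs_of_nonneg (by norm_num : (0:ℝ) ≤ 1/2)]
          norm_num
        · rw [if_neg (show ¬((i : ℕ) + 1 = (j : ℕ) ∨ (j : ℕ) + 1 = (i : ℕ)) by omega)]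
          have habs : 1 ≤ |(((i : ℕ) : ℝ) - ((j : ℕ) : ℝ)) / 2| := by
            have h4 : (i : ℕ) + 2 ≤ (j : ℕ) ∨ (j : ℕ) + 2 ≤ (i : ℕ) := by omega
            rcases h4 with h4 | h4
            · have : ((i : ℕ) : ℝ) + 2 ≤ ((j : ℕ) : ℝ) := by exact_mod_cast h4
              rw [abs_of_nonpos (by linarith)]; linarith
            · have : ((j : ℕ) : ℝ) + 2 ≤ ((i : ℕ) : ℝ) := by exact_mod_cast h4
              rw [abs_of_nonneg (by linarith)]; linarith
          split_ifs with hle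
          · rw [le_antisymm hle habs]; ring
          · rfl
  -- every S n is Hermitian
  have hHerm : ∀ n : ℕ, (S n).IsHermitian := by
    intro n
    show (S n)ᴴ = S n
    ext i j
    rw [Matrix.conjTranspose_apply, hE, hE, star_trivial]
    split_ifs <;> first | rfl | (exfalso; omega)
  -- Part 2 : the smallest eigenvalue
  have part2 : ∀ n : ℕ, 1 ≤ n → ∀ hH : (S n).IsHermitian,
      (⨅ i, hH.eigenvalues i) = 1 + Real.cos (n * π / (n + 1)) ∧
      0 < ⨅ i, hH.eigenvalues i := by
    intro n hn hH
    obtain ⟨m, rfl⟩ : ∃ m, n = m + 1 := ⟨n - 1, by omega⟩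
    set N : ℕ := m + 1 with hN
    set θ : ℝ := π / ((m : ℝ) + 2) with hθ
    set μ : ℝ := 1 - Real.cos θ with hμ
    have hm2 : (0 : ℝ) < (m : ℝ) + 2 := by positivity
    have hθpos : 0 < θ := by rw [hθ]; positivity
    have hθlt : θ < π := by
      rw [hθ]
      rw [div_lt_iff₀ hm2]
      nlinarith [Real.pi_pos]
    -- the target value equals μ
    have hμeq : (1 : ℝ) + Real.cos ((N : ℝ) * π / ((N : ℝ) + 1)) = μ := by
      have h1 : (N : ℝ) * π / ((N : ℝ) + 1) = π - θ := by
        rw [hθ, hN]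
        push_cast
        field_simp
        ring
      rw [h1, Real.cos_pi_sub, hμ]
      ring
    -- μ is positive
    have hμpos : 0 < μ := by
      rw [hμ, sub_pos]
      rcases lt_or_eq_of_le (Real.cos_le_one θ) with h | h
      · exact h
      · exfalso
        have := (Real.cos_eq_one_iff_of_lt_of_lt
          (by nlinarith [Real.pi_pos] : -(2 * π) < θ)
          (by nlinarith [Real.pi_pos] : θ < 2 * π)).mp h
        exact absurd this (ne_of_gt hθpos)
    -- quadratic form bound
    have hQF : ∀ x : Fin N → ℝ, μ * (x ⬝ᵥ x) ≤ x ⬝ᵥ (S N *ᵥ x) := by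
      intro x
      set X : ℕ → ℝ := fun k => if h : k < N then x ⟨k, h⟩ else 0 with hXdef
      have hX : ∀ k : ℕ, X k = if h : k < N then x ⟨k, h⟩ else 0 := fun k => rfl
      have hx : ∀ j : Fin N, x j = X (j : ℕ) := by
        intro j; rw [hX]; simp [j.isLt]
      have hmv := tri_mulVec N (S N) (hE N) x X hX
      have hxx : x ⬝ᵥ x = ∑ k ∈ Finset.range N, X k ^ 2 := by
        rw [dotProduct]
        rw [show (∑ j : Fin N, x j * x j) = ∑ j : Fin N, X (j : ℕ) ^ 2 by
          apply Finset.sum_congr rfl; intro j _; rw [hx j]; ring]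
        exact Fin.sum_univ_eq_sum_range (fun k => X k ^ 2) N
      have hq : x ⬝ᵥ (S N *ᵥ x)
          = ∑ k ∈ Finset.range N, X k ^ 2 + ∑ k ∈ Finset.range m, X k * X (k + 1) := by
        rw [dotProduct]
        rw [show (∑ j : Fin N, x j * (S N *ᵥ x) j)
            = ∑ j : Fin N, X (j : ℕ) * (X (j : ℕ) + X ((j : ℕ) + 1) / 2
              + (if (j : ℕ) = 0 then 0 else X ((j : ℕ) - 1) / 2)) by
          apply Finset.sum_congr rfl; intro j _; rw [hx j, hmv j]]
        rw [Fin.sum_univ_eq_sum_range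
          (fun k => X k * (X k + X (k + 1) / 2 + (if k = 0 then 0 else X (k - 1) / 2))) N]
        have expand : ∀ k : ℕ,
            X k * (X k + X (k + 1) / 2 + (if k = 0 then 0 else X (k - 1) / 2))
            = X k ^ 2 + X k * X (k + 1) / 2
              + (if k = 0 then 0 else X k * X (k - 1) / 2) := by
          intro k
          split_ifs <;> ring
        rw [Finset.sum_congr rfl (fun k _ => expand k), Finset.sum_add_distrib,
          Finset.sum_add_distrib]
        have e2 : ∑ k ∈ Finset.range N, X k * X (k + 1) / 2
            = ∑ k ∈ Finset.range m, X k * X (k + 1) / 2 := by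
          rw [hN, Finset.sum_range_succ]
          have : X (m + 1) = 0 := by rw [hX]; simp [hN]
          rw [this]
          simp
        have e3 : (∑ k ∈ Finset.range N, if k = 0 then 0 else X k * X (k - 1) / 2)
            = ∑ k ∈ Finset.range m, X (k + 1) * X k / 2 := by
          rw [hN, Finset.sum_range_succ']
          simp
        rw [e2, e3, add_assoc, ← Finset.sum_add_distrib]
        congr 1
        apply Finset.sum_congr rfl
        intro k _
        ring
      have hkey := tri_key_ineq m X
      rw [hxx, hq, hμ]
      have hNm : N = m + 1 := hN
      rw [hNm]
      nlinarith [hkey]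
    -- lower bound for every eigenvalue
    have hlow : ∀ i, μ ≤ hH.eigenvalues i := by
      intro i
      set w : Fin N → ℝ := ⇑(hH.eigenvectorBasis i) with hw
      have hmul : S N *ᵥ w = hH.eigenvalues i • w := hH.mulVec_eigenvectorBasis i
      have hw1 : w ⬝ᵥ w = 1 := by
        have hnorm : ‖hH.eigenvectorBasis i‖ = 1 := hH.eigenvectorBasis.orthonormal.1 i
        rw [EuclideanSpace.norm_eq] at hnorm
        have hsq : ∑ j, ‖hH.eigenvectorBasis i j‖ ^ 2 = 1 := by
          have h0 : (0:ℝ) ≤ ∑ j, ‖hH.eigenvectorBasis i j‖ ^ 2 :=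
            Finset.sum_nonneg fun j _ => sq_nonneg _
          nlinarith [Real.sq_sqrt h0, hnorm]
        calc w ⬝ᵥ w = ∑ j, ‖hH.eigenvectorBasis i j‖ ^ 2 := by
              rw [dotProduct]
              apply Finset.sum_congr rfl
              intro j _
              rw [Real.norm_eq_abs, sq_abs, pow_two]
          _ = 1 := hsq
      have h1 : w ⬝ᵥ (S N *ᵥ w) = hH.eigenvalues i := by
        rw [hmul, dotProduct_smul, smul_eq_mul, hw1, mul_one]
      have h2 := hQF w
      rw [h1, hw1, mul_one] at h2
      exact h2
    -- the eigenvector for μ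
    set v : Fin N → ℝ := fun i => (-1) ^ (i : ℕ) * Real.sin (((i : ℕ) + 1) * θ) with hv
    have hvne : v ≠ 0 := by
      intro h
      have h0 : v ⟨0, by omega⟩ = 0 := by rw [h]; rfl
      rw [hv] at h0
      simp only [pow_zero, one_mul, Nat.cast_zero, zero_add] at h0
      have hp : 0 < Real.sin θ := Real.sin_pos_of_pos_of_lt_pi hθpos hθlt
      rw [h0] at hp
      exact lt_irrefl 0 hp
    have hmulv : S N *ᵥ v = μ • v := by
      set X : ℕ → ℝ := fun k => if h : k < N then v ⟨k, h⟩ else 0 with hXdef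
      have hX : ∀ k : ℕ, X k = if h : k < N then v ⟨k, h⟩ else 0 := fun k => rfl
      have hXV : ∀ k : ℕ, k ≤ N → X k = (-1) ^ k * Real.sin (((k : ℝ) + 1) * θ) := by
        intro k hk
        rcases lt_or_eq_of_le hk with h | h
        · rw [hX]; simp [h, hv]
        · rw [hX, h]
          have hz : Real.sin (((N : ℝ) + 1) * θ) = 0 := by
            have : ((N : ℝ) + 1) * θ = π := by
              rw [hθ, hN]; push_cast; field_simp; ring
            rw [this, Real.sin_pi]
          simp [hz]
      funext i
      have hmv := tri_mulVec N (S N) (hE N) v X hX i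
      rw [hmv]
      have hvi : v i = (-1) ^ (i : ℕ) * Real.sin ((((i : ℕ) : ℝ) + 1) * θ) := rfl
      show X (i : ℕ) + X ((i : ℕ) + 1) / 2 + _ = μ * v i
      rw [hvi, hμ]
      rcases Nat.eq_zero_or_pos (i : ℕ) with h0 | h0
      · rw [h0, if_pos rfl, show (0 : ℕ) + 1 = 1 from rfl,
          hXV 0 (by omega), hXV 1 (by omega)]
        push_cast
        rw [show ((0 : ℝ) + 1) * θ = θ by ring, show ((1 : ℝ) + 1) * θ = 2 * θ by ring,
          Real.sin_two_mul]
        ring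
      · set l : ℕ := (i : ℕ) - 1 with hl
        have hil : (i : ℕ) = l + 1 := by omega
        rw [hil, if_neg (by omega), show l + 1 + 1 = l + 2 from rfl]
        have e0 : X l = (-1) ^ l * Real.sin (((l : ℝ) + 1) * θ) := hXV l (by omega)
        have e1 : X (l + 1) = (-1) ^ l * (-1) * Real.sin (((l : ℝ) + 2) * θ) := by
          rw [hXV (l + 1) (by omega), show (((l + 1 : ℕ) : ℝ) + 1) = (l : ℝ) + 2 by
            push_cast; ring, pow_succ]
        have e2 : X (l + 2) = (-1) ^ l * Real.sin (((l : ℝ) + 3) * θ) := by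
          rw [hXV (l + 2) (by omega), show (((l + 2 : ℕ) : ℝ) + 1) = (l : ℝ) + 3 by
            push_cast; ring, show l + 2 = l + 1 + 1 from rfl, pow_succ, pow_succ]
          ring
        have e3 : ((-1 : ℝ)) ^ (l + 1) * Real.sin ((((l + 1 : ℕ) : ℝ) + 1) * θ)
            = (-1) ^ l * (-1) * Real.sin (((l : ℝ) + 2) * θ) := by
          rw [show (((l + 1 : ℕ) : ℝ) + 1) = (l : ℝ) + 2 by push_cast; ring, pow_succ]
        rw [e0, e1, e2, e3]
        have hrec := tri_sin_rec' θ ((l : ℝ) + 1)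
        rw [show (l : ℝ) + 1 + 2 = (l : ℝ) + 3 by ring,
          show (l : ℝ) + 1 + 1 = (l : ℝ) + 2 by ring] at hrec
        linear_combination ((-1 : ℝ) ^ l / 2) * hrec
    obtain ⟨i0, hi0⟩ := herm_eig_mem hH hvne hmulv
    have hInf : (⨅ i, hH.eigenvalues i) = μ :=
      le_antisymm (hi0 ▸ ciInf_le (Set.finite_range _).bddBelow i0) (le_ciInf hlow)
    constructor
    · rw [hInf, hμeq]
    · rw [hInf]; exact hμpos
  -- Part 3 : the limit
  have part3 : Tendsto (fun n : ℕ => 1 + Real.cos (n * π / (n + 1))) atTop (𝓝 0) := by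
    have h1 : ∀ n : ℕ, (n : ℝ) * π / ((n : ℝ) + 1) = π - π / ((n : ℝ) + 1) := by
      intro n
      have : ((n : ℝ) + 1) ≠ 0 := by positivity
      field_simp
      ring
    have h2 : Tendsto (fun n : ℕ => π / ((n : ℝ) + 1)) atTop (𝓝 0) := by
      have := tendsto_one_div_add_atTop_nhds_zero_nat (𝕜 := ℝ)
      have h3 : (fun n : ℕ => π / ((n : ℝ) + 1)) = fun n : ℕ => π * (1 / ((n : ℝ) + 1)) := by
        funext n; ring
      rw [h3]
      simpa using this.const_mul π
    have h4 : Tendsto (fun n : ℕ => (n : ℝ) * π / ((n : ℝ) + 1)) atTop (𝓝 π) := by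
      simp only [h1]
      simpa using tendsto_const_nhds.sub h2
    have h5 : Tendsto (fun n : ℕ => Real.cos ((n : ℝ) * π / ((n : ℝ) + 1))) atTop
        (𝓝 (Real.cos π)) := (Real.continuous_cos.tendsto π).comp h4
    have h6 := (tendsto_const_nhds : Tendsto (fun _ : ℕ => (1:ℝ)) atTop (𝓝 1)).add h5
    rw [Real.cos_pi] at h6
    simpa using h6
  refine ⟨hE, part2, part3, ?_⟩
  -- Part 4 : the infimum is 0
  set T : Set ℝ := {x : ℝ | ∃ n : ℕ, 1 ≤ n ∧ ∃ hH : (S n).IsHermitian,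
      x = ⨅ i, hH.eigenvalues i} with hT
  have hmem : ∀ n : ℕ, 1 ≤ n → (1 + Real.cos (n * π / (n + 1))) ∈ T := by
    intro n hn
    exact ⟨n, hn, hHerm n, ((part2 n hn (hHerm n)).1).symm⟩
  have hpos : ∀ x ∈ T, (0:ℝ) ≤ x := by
    rintro x ⟨n, hn, hH, rfl⟩
    exact le_of_lt (part2 n hn hH).2
  have hbdd : BddBelow T := ⟨0, hpos⟩
  apply le_antisymm
  · apply ge_of_tendsto part3
    filter_upwards [eventually_ge_atTop 1] with n hn
    exact csInf_le hbdd (hmem n hn)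
  · exact le_csInf ⟨_, hmem 1 le_rfl⟩ hpos
end
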